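/- The number of binary necklaces with r black beads and k - r white beads (cyclic sequences of length k up to rotation by the cyclic group of order k) equals (1/k) Σ_{d | gcd(r,k)} φ(d) · C(k/d, r/d). -/

import Mathlib

open Finset AddAction

section Aux

variable {k : ℕ} [NeZero k] {r : ℕ}

private lemma count_shift (b : ZMod k → Bool) (c : ZMod k) :
    (Finset.univ.filter fun x => b (x + c) = true).card
      = (Finset.univ.filter fun x => b x = true).card := by
  apply Finset.card_bij (fun x _ => x + c)
  · intro a ha; simp_all
  · intro a _ a' _ h; exact add_right_cancel h
  · intro y hy; exact ⟨y - c, by simp_all⟩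

private abbrev Nck (k r : ℕ) [NeZero k] := {b : ZMod k → Bool //
    (Finset.univ.filter fun x => b x = true).card = r}

private def nvadd (c : ZMod k) (b : Nck k r) : Nck k r :=
  ⟨fun x => b.1 (x + c), by rw [count_shift]; exact b.2⟩

private lemma nvadd_val (c : ZMod k) (b : Nck k r) (x : ZMod k) :
    (nvadd c b).1 x = b.1 (x + c) := rfl

instance : AddAction (ZMod k) (Nck k r) where
  vadd := nvadd
  zero_vadd b := by
    show nvadd 0 b = b
    exact Subtype.ext <| funext fun x => by rw [nvadd_val, add_zero]
  add_vadd a b f := by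
    show nvadd (a + b) f = nvadd a (nvadd b f)
    refine Subtype.ext <| funext fun x => ?_
    rw [nvadd_val, nvadd_val, nvadd_val]
    ac_rfl

private lemma vadd_def (c : ZMod k) (b : Nck k r) :
    (c +ᵥ b).1 = fun x => b.1 (x + c) := rfl

end Aux

section Fixed

variable {k : ℕ} [NeZero k] {r : ℕ}

private abbrev Qc (c : ZMod k) := ZMod k ⧸ AddSubgroup.zmultiples c

noncomputable instance (c : ZMod k) : Fintype (Qc c) := Fintype.ofFinite _

private lemma shift_zsmul {b : ZMod k → Bool} {c : ZMod k}
    (hb : ∀ x, b (x + c) = b x) : ∀ (z : ℤ) (x : ZMod k), b (x + z • c) = b x := by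
  intro z
  induction z using Int.induction_on with
  | zero => simp
  | succ n ih => intro x
                 have : x + ((n : ℤ) + 1) • c = (x + (n : ℤ) • c) + c := by
                   rw [add_zsmul, one_zsmul, add_assoc]
                 rw [this, hb, ih]
  | pred n ih => intro x
                 have : (x + (-(n : ℤ) - 1) • c) + c = x + (-(n : ℤ)) • c := by
                   rw [sub_zsmul, one_zsmul]; abel
                 rw [← ih x, ← this, hb]

/-- colourings fixed by rotation by `c` are functions on the quotient. -/
private noncomputable def fixedFunEquiv (c : ZMod k) :
    {b : ZMod k → Bool // ∀ x, b (x + c) = b x} ≃ (Qc c → Bool) where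
  toFun b q := Quotient.liftOn' q b.1 (fun x y h => by
    rw [QuotientAddGroup.leftRel_apply] at h
    obtain ⟨z, hz⟩ := h
    have hz' : z • c = -x + y := hz
    have hy : y = x + z • c := by rw [hz', add_neg_cancel_left]
    rw [hy, shift_zsmul b.2])
  invFun g := ⟨fun x => g (QuotientAddGroup.mk x), fun x => by
    refine congrArg g ((QuotientAddGroup.eq (s := AddSubgroup.zmultiples c)).mpr ?_)
    exact AddSubgroup.mem_zmultiples_iff.mpr ⟨(-1 : ℤ), by simp⟩⟩
  left_inv b := Subtype.ext <| funext fun x => rfl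
  right_inv g := funext fun q => by
    induction q using QuotientAddGroup.induction_on with
    | _ z => rfl

private lemma fiber_card (c : ZMod k) (q : Qc c) :
    (Finset.univ.filter fun x : ZMod k => QuotientAddGroup.mk x = q).card
      = addOrderOf c := by
  rw [← Fintype.card_subtype]
  rw [← Nat.card_eq_fintype_card]
  have e1 : {x : ZMod k // QuotientAddGroup.mk x = q}
      ≃ (QuotientAddGroup.mk ⁻¹' ({q} : Set (Qc c))) :=
    Equiv.subtypeEquivRight (by simp)
  rw [Nat.card_congr e1,
    Nat.card_congr (QuotientAddGroup.preimageMkEquivAddSubgroupProdSet _ _),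
    Nat.card_prod, Nat.card_zmultiples]
  simp

private lemma count_comp_mk (c : ZMod k) (g : Qc c → Bool) :
    (Finset.univ.filter fun x : ZMod k => g (QuotientAddGroup.mk x) = true).card
      = addOrderOf c * (Finset.univ.filter fun q => g q = true).card := by
  classical
  rw [Finset.card_eq_sum_card_fiberwise
    (f := (QuotientAddGroup.mk : ZMod k → Qc c)) (t := Finset.univ) (fun x _ => Finset.mem_univ _)]
  have key : ∀ q : Qc c,
      ((Finset.univ.filter fun x : ZMod k => g (QuotientAddGroup.mk x) = true).filter
        (fun x => QuotientAddGroup.mk x = q)).card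
      = if g q = true then addOrderOf c else 0 := by
    intro q
    split_ifs with h
    · rw [← fiber_card c q]
      congr 1
      ext x
      simp only [Finset.mem_filter, Finset.mem_univ, true_and]
      constructor
      · rintro ⟨-, hx⟩; exact hx
      · rintro hx; exact ⟨by rw [hx, h], hx⟩
    · rw [Finset.card_eq_zero]
      ext x
      simp only [Finset.mem_filter, Finset.mem_univ, true_and, Finset.notMem_empty,
        iff_false, not_and]
      intro hg hx
      exact h (by rw [← hx, hg])
  rw [Finset.sum_congr rfl fun q _ => key q]
  rw [← Finset.sum_filter]
  rw [Finset.sum_const, smul_eq_mul, mul_comm]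

end Fixed

section Count

variable {k : ℕ} [NeZero k] {r : ℕ}

private def boolFinsetEquiv {α : Type*} [Fintype α] [DecidableEq α] {s : ℕ} :
    {g : α → Bool // (Finset.univ.filter fun q => g q = true).card = s}
      ≃ {S : Finset α // S.card = s} where
  toFun g := ⟨Finset.univ.filter fun q => g.1 q = true, g.2⟩
  invFun S := ⟨fun q => decide (q ∈ S.1), by
    have hS : (Finset.univ.filter fun q => decide (q ∈ S.1) = true) = S.1 := by
      ext q; simp
    rw [hS, S.2]⟩
  left_inv g := Subtype.ext <| funext fun q => by simp
  right_inv S := Subtype.ext <| by ext q; simp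

private noncomputable def fixedEquivFull (c : ZMod k) :
    (fixedBy (Nck k r) c) ≃
      {g : Qc c → Bool //
        addOrderOf c * (Finset.univ.filter fun q => g q = true).card = r} where
  toFun p :=
    ⟨fixedFunEquiv c ⟨p.1.1, fun x => congrFun (congrArg Subtype.val p.2) x⟩, by
      rw [← count_comp_mk]
      exact p.1.2⟩
  invFun g :=
    ⟨⟨fun x => g.1 (QuotientAddGroup.mk x), by rw [count_comp_mk]; exact g.2⟩,
      Subtype.ext <| funext fun x => ((fixedFunEquiv c).symm g.1).2 x⟩
  left_inv p := Subtype.ext <| Subtype.ext <| funext fun x => rfl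
  right_inv g := Subtype.ext <| (fixedFunEquiv c).apply_symm_apply g.1

private lemma card_Qc (c : ZMod k) :
    Fintype.card (Qc c) = k / addOrderOf c := by
  have h1 := AddSubgroup.index_mul_card (AddSubgroup.zmultiples c)
  rw [Nat.card_zmultiples, Nat.card_zmod] at h1
  rw [← Nat.card_eq_fintype_card]
  show (AddSubgroup.zmultiples c).index = k / addOrderOf c
  exact (Nat.div_eq_of_eq_mul_left (addOrderOf_pos c) h1.symm).symm

private lemma card_fixedBy (c : ZMod k) :
    Nat.card (fixedBy (Nck k r) c) =
      if addOrderOf c ∣ r then (k / addOrderOf c).choose (r / addOrderOf c) else 0 := by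
  classical
  rw [Nat.card_congr (fixedEquivFull c)]
  split_ifs with h
  · have e2 : {g : Qc c → Bool //
        addOrderOf c * (Finset.univ.filter fun q => g q = true).card = r}
        ≃ {g : Qc c → Bool //
            (Finset.univ.filter fun q => g q = true).card = r / addOrderOf c} := by
      refine Equiv.subtypeEquivRight fun g => ⟨fun ht => ?_, fun ht => ?_⟩
      · rw [← ht, Nat.mul_div_cancel_left _ (addOrderOf_pos c)]
      · rw [ht, Nat.mul_div_cancel' h]
    rw [Nat.card_congr (e2.trans boolFinsetEquiv), Nat.card_eq_fintype_card,
      Fintype.card_finset_len, card_Qc]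
  · have : IsEmpty {g : Qc c → Bool //
        addOrderOf c * (Finset.univ.filter fun q => g q = true).card = r} :=
      ⟨fun g => h ⟨_, g.2.symm⟩⟩
    simp [Nat.card_of_isEmpty]

end Count

section Main

variable {k r : ℕ} [NeZero k]

private lemma rel_symm_aux {f g : Nck k r}
    (h : ∃ c : ZMod k, ∀ x, f.1 (x + c) = g.1 x) :
    ∃ c : ZMod k, ∀ x, g.1 (x + c) = f.1 x := by
  obtain ⟨c, hc⟩ := h
  refine ⟨-c, fun x => ?_⟩
  rw [← hc, add_assoc, neg_add_cancel, add_zero]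

private lemma rel_eq_orbit (f g : Nck k r) :
    (∃ c : ZMod k, ∀ x, f.1 (x + c) = g.1 x)
      ↔ (AddAction.orbitRel (ZMod k) (Nck k r)).r f g := by
  change _ ↔ f ∈ AddAction.orbit (ZMod k) g
  rw [AddAction.mem_orbit_iff]
  constructor
  · intro h
    obtain ⟨c, hc⟩ := rel_symm_aux h
    exact ⟨c, Subtype.ext <| funext fun x => hc x⟩
  · rintro ⟨c, hc⟩
    refine rel_symm_aux ⟨c, fun x => ?_⟩
    exact congrFun (congrArg Subtype.val hc) x

private lemma necklace_zmod (k r : ℕ) [NeZero k] :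
    Nat.card (Quot (fun f g : Nck k r => ∃ c : ZMod k, ∀ x, f.1 (x + c) = g.1 x)) * k
      = ∑ m ∈ (Nat.gcd r k).divisors, Nat.totient m * Nat.choose (k / m) (r / m) := by
  classical
  letI : ∀ c : ZMod k, Fintype (fixedBy (Nck k r) c) := fun c => Fintype.ofFinite _
  letI : Fintype (Quotient (AddAction.orbitRel (ZMod k) (Nck k r))) := Fintype.ofFinite _
  have hb := AddAction.sum_card_fixedBy_eq_card_orbits_mul_card_addGroup (ZMod k) (Nck k r)
  rw [ZMod.card] at hb
  have hq : Nat.card (Quot (fun f g : Nck k r => ∃ c : ZMod k, ∀ x, f.1 (x + c) = g.1 x))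
      = Fintype.card (Quotient (AddAction.orbitRel (ZMod k) (Nck k r))) := by
    rw [← Nat.card_eq_fintype_card]
    exact Nat.card_congr (Quot.congrRight rel_eq_orbit)
  rw [hq, ← hb]
  have hfix : ∀ c : ZMod k, Fintype.card (fixedBy (Nck k r) c)
      = if addOrderOf c ∣ r then (k / addOrderOf c).choose (r / addOrderOf c) else 0 := by
    intro c; rw [← Nat.card_eq_fintype_card]; exact card_fixedBy c
  rw [Finset.sum_congr rfl fun c _ => hfix c]
  have hmaps : ∀ c : ZMod k, c ∈ Finset.univ → addOrderOf c ∈ k.divisors := by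
    intro c _
    have hd : addOrderOf c ∣ Fintype.card (ZMod k) := addOrderOf_dvd_card
    rw [ZMod.card] at hd
    exact Nat.mem_divisors.mpr ⟨hd, NeZero.ne k⟩
  rw [← Finset.sum_fiberwise_of_maps_to hmaps
      (fun c => if addOrderOf c ∣ r then (k / addOrderOf c).choose (r / addOrderOf c) else 0)]
  have inner : ∀ m ∈ k.divisors,
      (∑ c ∈ Finset.univ.filter (fun c : ZMod k => addOrderOf c = m),
        if addOrderOf c ∣ r then (k / addOrderOf c).choose (r / addOrderOf c) else 0)
      = Nat.totient m * (if m ∣ r then (k / m).choose (r / m) else 0) := by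
    intro m hm
    have step : ∀ c ∈ Finset.univ.filter (fun c : ZMod k => addOrderOf c = m),
        (if addOrderOf c ∣ r then (k / addOrderOf c).choose (r / addOrderOf c) else 0)
        = (if m ∣ r then (k / m).choose (r / m) else 0) := by
      intro c hc
      rw [(Finset.mem_filter.mp hc).2]
    rw [Finset.sum_congr rfl step, Finset.sum_const, smul_eq_mul]
    congr 1
    exact IsAddCyclic.card_addOrderOf_eq_totient
      (by rw [ZMod.card]; exact (Nat.mem_divisors.mp hm).1)
  rw [Finset.sum_congr rfl inner]
  have hsplit : ∀ m ∈ k.divisors, Nat.totient m * (if m ∣ r then (k / m).choose (r / m) else 0)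
      = if m ∣ r then Nat.totient m * (k / m).choose (r / m) else 0 := by
    intro m _; split_ifs <;> simp
  rw [Finset.sum_congr rfl hsplit, ← Finset.sum_filter]
  congr 1
  ext m
  simp only [Finset.mem_filter, Nat.mem_divisors]
  constructor
  · rintro ⟨⟨hmk, -⟩, hmr⟩
    exact ⟨Nat.dvd_gcd_iff.mpr ⟨hmr, hmk⟩, Nat.gcd_ne_zero_right (NeZero.ne k)⟩
  · rintro ⟨hg, -⟩
    obtain ⟨hmr, hmk⟩ := Nat.dvd_gcd_iff.mp hg
    exact ⟨⟨hmk, NeZero.ne k⟩, hmr⟩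

end Main

/-- Rotation equivalence of binary colourings of a cycle of length k. -/
def NecklaceRel (k : ℕ) (f g : Fin k → Bool) : Prop :=
  ∃ c : Fin k, ∀ x : Fin k, f (x + c) = g x

/-- The number of binary necklaces of length k with exactly r black beads
(colourings up to rotation by the cyclic group of order k) equals
(1/k) Σ_{d ∣ gcd(r,k)} φ(d)·C(k/d, r/d). -/
theorem necklace_count (k r : ℕ) (hk : 0 < k) (hrk : r ≤ k) :
    Nat.card (Quot (fun f g : {b : Fin k → Bool //
        (Finset.univ.filter fun x => b x = true).card = r} =>
      NecklaceRel k f.1 g.1)) =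
      (∑ d ∈ (Nat.gcd r k).divisors, Nat.totient d * Nat.choose (k / d) (r / d)) / k := by
  obtain ⟨n, rfl⟩ : ∃ n, k = n + 1 := ⟨k - 1, by omega⟩
  have h := necklace_zmod (n + 1) r
  rw [← h, Nat.mul_div_cancel _ (Nat.succ_pos n)]
  rfl
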